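/- Under the bound |τ^{k̄}(P)|/k̄! ≤ A^{Σk_i} B^{deg P} (Π C_{k_i}) C_{deg P}, the multi-series τ_t(P) = Σ_{k̄ ∈ ℕ^n} Π_i ((-t_i)^{k_i}/k_i!) τ^{k̄}(P) converges absolutely for |t_i| < 1/(4A), and satisfies |τ_t(P)| ≤ Π_{i=1}^n (1 - 4A|t_i|)^{-1} (4B)^{deg P}. -/

import Mathlib

lemma catalan_le_four_pow (k : ℕ) : catalan k ≤ 4 ^ k := by
  have h1 : catalan k ≤ (k + 1) * catalan k := Nat.le_mul_of_pos_left _ k.succ_pos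
  have h2 : (k + 1) * catalan k = k.centralBinom := succ_mul_catalan_eq_centralBinom k
  have h3 : k.centralBinom ≤ 2 ^ (2 * k) := by
    rw [Nat.centralBinom, ← Nat.sum_range_choose (2 * k)]
    exact Finset.single_le_sum (fun i _ => Nat.zero_le _)
      (Finset.mem_range.mpr (by omega))
  calc catalan k ≤ 2 ^ (2 * k) := by omega
    _ = 4 ^ k := by rw [pow_mul]; norm_num

set_option maxHeartbeats 800000 in
lemma hasSum_pi_prod : ∀ (n : ℕ) (f : Fin n → ℕ → ℝ) (S : Fin n → ℝ),
    (∀ i k, 0 ≤ f i k) → (∀ i, HasSum (f i) (S i)) →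
    HasSum (fun k : Fin n → ℕ => ∏ i, f i (k i)) (∏ i, S i) := by
  intro n
  induction n with
  | zero =>
    intro f S h0 h
    simpa using hasSum_fintype (fun k : Fin 0 → ℕ => ∏ i, f i (k i))
  | succ n ih =>
    intro f S h0 h
    have ihn := ih (fun i => f i.succ) (fun i => S i.succ)
      (fun i k => h0 i.succ k) (fun i => h i.succ)
    have hsum : Summable (fun p : ℕ × (Fin n → ℕ) =>
        f 0 p.1 * ∏ i : Fin n, f i.succ (p.2 i)) :=
      Summable.mul_of_nonneg (f := f 0)
        (g := fun k : Fin n → ℕ => ∏ i : Fin n, f i.succ (k i))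
        (h 0).summable ihn.summable (fun k => h0 0 k)
        (fun _ => Finset.prod_nonneg fun i _ => h0 i.succ _)
    have key : HasSum (fun p : ℕ × (Fin n → ℕ) => f 0 p.1 * ∏ i : Fin n, f i.succ (p.2 i))
        (S 0 * ∏ i : Fin n, S i.succ) :=
      HasSum.mul (f := f 0) (g := fun k : Fin n → ℕ => ∏ i : Fin n, f i.succ (k i))
        (h 0) ihn hsum
    have := ((Fin.consEquiv fun _ : Fin (n + 1) => ℕ).symm.hasSum_iff).mpr key
    rw [Fin.prod_univ_succ]
    convert this using 1
    funext k
    simp [Fin.consEquiv, Fin.prod_univ_succ, Fin.tail]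

/-- Under the Catalan-type bound
`|τ^{kk}(P)|/kk! ≤ A^{Σ k_i} B^{deg P} (∏ C_{k_i}) C_{deg P}`,
the multi-series `τ_t(P) = ∑_{kk} ∏ ((-t_i)^{k_i}/k_i!) τ^{kk}(P)` converges
absolutely whenever `|t_i| < 1/(4A)` for all `i`, and its sum satisfies
`|τ_t(P)| ≤ ∏ (1 - 4A|t_i|)⁻¹ (4B)^{deg P}`. -/
theorem generating_series_convergence
    (m n : ℕ) (A B : ℝ) (hA : 1 ≤ A) (hB : 1 ≤ B)
    (τ : (Fin n → ℕ) → List (Fin m) → ℝ)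
    (hbound : ∀ (kk : Fin n → ℕ) (P : List (Fin m)),
      |τ kk P| / ∏ i, ((kk i).factorial : ℝ) ≤
        A ^ (∑ i, kk i) * B ^ P.length *
          (∏ i, (catalan (kk i) : ℝ)) * (catalan P.length : ℝ))
    (t : Fin n → ℝ) (ht : ∀ i, |t i| < 1 / (4 * A)) (P : List (Fin m)) :
    Summable (fun kk : Fin n → ℕ =>
      |(∏ i, (-t i) ^ (kk i) / ((kk i).factorial : ℝ)) * τ kk P|) ∧
    |∑' kk : Fin n → ℕ, (∏ i, (-t i) ^ (kk i) / ((kk i).factorial : ℝ)) * τ kk P| ≤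
      (∏ i, (1 - 4 * A * |t i|)⁻¹) * (4 * B) ^ P.length := by
  have hA0 : (0:ℝ) < A := lt_of_lt_of_le one_pos hA
  have h4A : (0:ℝ) < 4 * A := by linarith
  set r : Fin n → ℝ := fun i => 4 * A * |t i| with hr_def
  have hr0 : ∀ i, 0 ≤ r i := fun i => by positivity
  have hr1 : ∀ i, r i < 1 := by
    intro i
    have := (lt_div_iff₀ h4A).mp (ht i)
    simpa [hr_def, mul_comm] using this
  have hcat : ∀ k : ℕ, ((catalan k : ℝ)) ≤ 4 ^ k := by
    intro k
    exact_mod_cast Nat.cast_le.mpr (catalan_le_four_pow k) |>.trans_eq (by push_cast; ring)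
  have hgeo : ∀ i, HasSum (fun k : ℕ => r i ^ k) ((1 - r i)⁻¹) := fun i =>
    hasSum_geometric_of_lt_one (hr0 i) (hr1 i)
  have hg : HasSum (fun kk : Fin n → ℕ => ∏ i, r i ^ kk i) (∏ i, (1 - r i)⁻¹) :=
    hasSum_pi_prod n (fun i k => r i ^ k) (fun i => (1 - r i)⁻¹)
      (fun i k => pow_nonneg (hr0 i) k) hgeo
  have hG : HasSum (fun kk : Fin n → ℕ => (∏ i, r i ^ kk i) * (4 * B) ^ P.length)
      ((∏ i, (1 - r i)⁻¹) * (4 * B) ^ P.length) := hg.mul_right _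
  have hle : ∀ kk : Fin n → ℕ,
      |(∏ i, (-t i) ^ (kk i) / ((kk i).factorial : ℝ)) * τ kk P| ≤
        (∏ i, r i ^ kk i) * (4 * B) ^ P.length := by
    intro kk
    have habs : |(∏ i, (-t i) ^ (kk i) / ((kk i).factorial : ℝ)) * τ kk P|
        = (∏ i, |t i| ^ kk i / ((kk i).factorial : ℝ)) * |τ kk P| := by
      rw [abs_mul, Finset.abs_prod]
      congr 1
      refine Finset.prod_congr rfl fun i _ => ?_
      rw [abs_div, abs_pow, abs_neg, Nat.abs_cast]
    have hprodnn : 0 ≤ ∏ i, |t i| ^ kk i :=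
      Finset.prod_nonneg fun i _ => pow_nonneg (abs_nonneg _) _
    calc |(∏ i, (-t i) ^ (kk i) / ((kk i).factorial : ℝ)) * τ kk P|
        = (∏ i, |t i| ^ kk i) * (|τ kk P| / ∏ i, ((kk i).factorial : ℝ)) := by
          rw [habs, Finset.prod_div_distrib, div_mul_eq_mul_div, mul_div_assoc]
      _ ≤ (∏ i, |t i| ^ kk i) *
          (A ^ (∑ i, kk i) * B ^ P.length *
            (∏ i, (catalan (kk i) : ℝ)) * (catalan P.length : ℝ)) :=
          mul_le_mul_of_nonneg_left (hbound kk P) hprodnn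
      _ ≤ (∏ i, |t i| ^ kk i) *
          (A ^ (∑ i, kk i) * B ^ P.length *
            (∏ i, (4:ℝ) ^ kk i) * (4:ℝ) ^ P.length) := by
          gcongr with i _ <;>
            first
              | exact hcat _
              | positivity
              | exact Finset.prod_nonneg fun j _ => (catalan (kk j)).cast_nonneg
      _ = (∏ i, r i ^ kk i) * (4 * B) ^ P.length := by
          rw [← Finset.prod_pow_eq_pow_sum]
          simp only [hr_def, mul_pow, Finset.prod_mul_distrib]
          ring
  have hsummable : Summable (fun kk : Fin n → ℕ =>
      |(∏ i, (-t i) ^ (kk i) / ((kk i).factorial : ℝ)) * τ kk P|) :=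
    Summable.of_nonneg_of_le (fun _ => abs_nonneg _) hle hG.summable
  refine ⟨hsummable, ?_⟩
  calc |∑' kk : Fin n → ℕ, (∏ i, (-t i) ^ (kk i) / ((kk i).factorial : ℝ)) * τ kk P|
      ≤ ∑' kk : Fin n → ℕ,
          |(∏ i, (-t i) ^ (kk i) / ((kk i).factorial : ℝ)) * τ kk P| := by
        have := norm_tsum_le_tsum_norm (f := fun kk : Fin n → ℕ =>
          (∏ i, (-t i) ^ (kk i) / ((kk i).factorial : ℝ)) * τ kk P)
          (by simpa only [Real.norm_eq_abs] using hsummable)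
        simpa only [Real.norm_eq_abs] using this
    _ ≤ ∑' kk : Fin n → ℕ, (∏ i, r i ^ kk i) * (4 * B) ^ P.length :=
        Summable.tsum_le_tsum hle hsummable hG.summable
    _ = (∏ i, (1 - r i)⁻¹) * (4 * B) ^ P.length := hG.tsum_eq
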